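/- arXiv:1902.10587 — 6 statements merged into one kernel-verified Lean document; each statement's English description precedes it below -/
import Mathlib

section
/- For n ≥ 3 and λ ∈ (0,1), the quantity a_λ = (1/n)·λ·((λ^{n-2}-1)/(n-2))·((1+λ)/(1+λ^{n-1})) + (1/(2n))·(1-λ²) is strictly positive. -/
lemma auxA (l : ℝ) (h0 : 0 < l) (h1 : l < 1) (m : ℕ) :
    (m + 1 : ℝ) * l ^ (m + 1) * (1 - l) ≤ 1 - l ^ (m + 1) := by
  induction m with
  | zero => norm_num; nlinarith [sq_nonneg (1 - l)]
  | succ m ih =>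
      have hp : 0 < l ^ (m + 1) := pow_pos h0 _
      have h2 : l ^ (m + 2) = l ^ (m + 1) * l := pow_succ l (m + 1)
      push_cast at ih ⊢
      rw [show m + 1 + 1 = m + 2 from rfl, h2]
      nlinarith [mul_nonneg (mul_nonneg hp.le (sub_nonneg.2 h1.le)) (sub_nonneg.2 h1.le),
        mul_nonneg (mul_nonneg (mul_nonneg (Nat.cast_nonneg m) hp.le) (sub_nonneg.2 h1.le)) (sub_nonneg.2 h1.le)]

lemma auxB (l : ℝ) (h0 : 0 < l) (h1 : l < 1) (m : ℕ) :
    2 * l * (1 - l ^ (m + 1)) < (m + 1 : ℝ) * (1 - l) * (1 + l ^ (m + 2)) := by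
  induction m with
  | zero =>
      norm_num
      nlinarith [mul_pos (mul_pos (sub_pos.2 h1) (sub_pos.2 h1)) (sub_pos.2 h1)]
  | succ m ih =>
      have hA := auxA l h0 h1 (m + 1)
      have hp : 0 < l ^ (m + 1) := pow_pos h0 _
      have h2 : l ^ (m + 2) = l ^ (m + 1) * l := pow_succ l (m + 1)
      have h3 : l ^ (m + 3) = l ^ (m + 1) * l * l := by rw [pow_succ, pow_succ]
      push_cast at ih hA ⊢
      rw [h2] at ih
      rw [show m + 1 + 1 = m + 2 from rfl, h2] at hA
      rw [show m + 1 + 1 = m + 2 from rfl, show m + 1 + 2 = m + 3 from rfl, h2, h3]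
      nlinarith [mul_nonneg (sub_nonneg.2 h1.le) (sub_nonneg.2 hA),
        mul_nonneg (mul_nonneg hp.le h0.le) (sub_nonneg.2 h1.le),
        mul_nonneg (mul_nonneg (mul_nonneg hp.le h0.le) (sub_nonneg.2 h1.le)) (sub_nonneg.2 h1.le)]

theorem stmt0 (n : ℕ) (hn : 3 ≤ n) (l : ℝ) (hl : l ∈ Set.Ioo (0:ℝ) 1) :
    0 < (1 / n : ℝ) * l * ((l ^ (n - 2) - 1) / (n - 2)) * ((1 + l) / (1 + l ^ (n - 1)))
      + (1 / (2 * n)) * (1 - l ^ 2) := by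
  obtain ⟨h0, h1⟩ := hl
  obtain ⟨m, rfl⟩ : ∃ m, n = m + 3 := ⟨n - 3, by omega⟩
  have hB := auxB l h0 h1 m
  rw [show m + 3 - 2 = m + 1 from by omega, show m + 3 - 1 = m + 2 from by omega]
  have hq : 0 < 1 + l ^ (m + 2) := by positivity
  have hcast : ((m + 3 : ℕ) : ℝ) = (m:ℝ) + 3 := by push_cast; ring
  rw [hcast, show ((m:ℝ) + 3 - 2) = (m:ℝ) + 1 from by ring]
  have key : 0 < (1 + l) * (((m:ℝ) + 1) * (1 - l) * (1 + l ^ (m + 2)) - 2 * l * (1 - l ^ (m + 1))) :=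
    mul_pos (by linarith) (by linarith)
  have hD : (0:ℝ) < 2 * ((m:ℝ) + 3) * (((m:ℝ) + 1) * (1 + l ^ (m + 2))) := by positivity
  have hm1 : ((m:ℝ) + 1) ≠ 0 := by positivity
  have hm3 : ((m:ℝ) + 3) ≠ 0 := by positivity
  rw [show (1 / ((m:ℝ) + 3)) * l * ((l ^ (m + 1) - 1) / ((m:ℝ) + 1)) * ((1 + l) / (1 + l ^ (m + 2)))
      + (1 / (2 * ((m:ℝ) + 3))) * (1 - l ^ 2)
      = ((1 + l) * (((m:ℝ) + 1) * (1 - l) * (1 + l ^ (m + 2)) - 2 * l * (1 - l ^ (m + 1))))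
        / (2 * ((m:ℝ) + 3) * (((m:ℝ) + 1) * (1 + l ^ (m + 2)))) from by
    field_simp
    ring]
  exact div_pos key hD
end

section
/- Let n ≥ 2, k > 1, λ ∈ (0,1), α = n/2 + k - 1, ω = -α·log λ, C = α(λ+1)·coth ω + (n/2)(λ-1), D = α² - n²/4. Then C'(λ)·(√(C²-4λD) + C) - 2D > 0, where C'(λ) = α·coth ω + ((1+λ)/λ)·α²/sinh²ω + n/2. -/
set_option maxHeartbeats 800000 in
theorem stmt7 (n : ℕ) (hn : 2 ≤ n) (k l α ω C D C' : ℝ) (hk : 1 < k)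
    (hl : l ∈ Set.Ioo (0:ℝ) 1)
    (hα : α = n/2 + k - 1) (hω : ω = -α * Real.log l)
    (hC : C = α * (l + 1) * (Real.cosh ω / Real.sinh ω) + (n/2) * (l - 1))
    (hD : D = α^2 - n^2/4)
    (hC' : C' = α * (Real.cosh ω / Real.sinh ω) + ((1 + l)/l) * α^2 / (Real.sinh ω)^2 + n/2) :
    0 < C' * (Real.sqrt (C^2 - 4*l*D) + C) - 2*D := by
  obtain ⟨hl0, hl1⟩ := hl
  have hn2 : (2:ℝ) ≤ (n:ℝ) := by exact_mod_cast hn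
  obtain ⟨m, hm⟩ : ∃ x : ℝ, x = (n:ℝ)/2 := ⟨_, rfl⟩
  have hm1 : 1 ≤ m := by rw [hm]; linarith
  have hαm : m < α := by rw [hα, hm]; linarith
  have hα0 : 0 < α := by linarith
  have hω0 : 0 < ω := by
    rw [hω]
    have hlog := Real.log_neg hl0 hl1
    have := mul_pos hα0 (neg_pos.mpr hlog)
    linarith [this, (by ring : α * (-Real.log l) = -α * Real.log l)]
  have hs : 0 < Real.sinh ω := Real.sinh_pos_iff.mpr hω0
  have hts : Real.sinh ω < Real.cosh ω := Real.sinh_lt_cosh ω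
  obtain ⟨t, ht⟩ : ∃ x : ℝ, x = Real.cosh ω / Real.sinh ω := ⟨_, rfl⟩
  have ht1 : 1 < t := by rw [ht]; exact (one_lt_div hs).mpr hts
  have ht0 : 0 < t := by linarith
  have hts2 : t^2 - 1 = 1 / (Real.sinh ω)^2 := by
    rw [ht]
    field_simp
    linarith [Real.cosh_sq ω]
  have ht2 : 0 < t^2 - 1 := by
    have := mul_lt_mul_of_pos_left ht1 ht0
    have h1t : 1 * 1 < t * 1 := by linarith
    nlinarith [mul_lt_mul_of_pos_left ht1 ht0]
  obtain ⟨A, hA⟩ : ∃ x : ℝ, x = α * t := ⟨_, rfl⟩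
  obtain ⟨B, hB⟩ : ∃ x : ℝ, x = α^2 * (t^2 - 1) := ⟨_, rfl⟩
  have hBpos : 0 < B := by rw [hB]; positivity
  have hAα : α < A := by
    rw [hA]
    calc α = α * 1 := (mul_one α).symm
    _ < α * t := mul_lt_mul_of_pos_left ht1 hα0
  have hA2 : A^2 = α^2 + B := by rw [hA, hB]; ring
  have hCeq : C = A*(l+1) + m*(l-1) := by rw [hC, hA, hm, ht]; ring
  have hDeq : D = α^2 - m^2 := by rw [hD, hm]; ring
  have hC'eq : C' = A + (1+l)*B/l + m := by
    rw [hC', hA, hB, hts2, hm, ht]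
    field_simp
  have hmA : m < A := lt_trans hαm hAα
  have hC0 : 0 < C := by
    rw [hCeq]
    have h1 : m*(l+1) < A*(l+1) := mul_lt_mul_of_pos_right hmA (by linarith)
    have h2 : 0 < m*l := mul_pos (by linarith) hl0
    have h3 : m*(l+1) + m*(l-1) = 2*(m*l) := by ring
    linarith
  have hC'0 : 0 < C' := by
    rw [hC'eq]
    have h1 : 0 < (1+l)*B/l := by positivity
    linarith
  have hQpos : 0 < C^2 - 4*l*D := by
    have hQeq : C^2 - 4*l*D = (A*(1-l) - m*(1+l))^2 + 4*(l*B) := by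
      rw [hCeq, hDeq]; linear_combination (4*l) * hA2
    rw [hQeq]
    have h4 := sq_nonneg (A*(1-l) - m*(1+l))
    have h5 := mul_pos hl0 hBpos
    linarith
  obtain ⟨S, hS⟩ : ∃ x : ℝ, x = Real.sqrt (C^2 - 4*l*D) := ⟨_, rfl⟩
  rw [← hS]
  have hS0 : 0 ≤ S := hS ▸ Real.sqrt_nonneg _
  have hS2 : S^2 = C^2 - 4*l*D := by rw [hS]; exact Real.sq_sqrt hQpos.le
  obtain ⟨R, hR⟩ : ∃ x : ℝ, x = C - 2*l*C' := ⟨_, rfl⟩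
  have hRe : R = A*(1-l) - m*(1+l) - 2*(1+l)*B := by
    rw [hR, hCeq, hC'eq]
    field_simp
    ring
  have hSR : R < S := by
    rcases lt_or_ge R 0 with h | h
    · linarith
    · have hkey : S^2 - R^2 = 4*(B*(l + (1+l)*R + (1+l)^2*B)) := by
        rw [hS2, hCeq, hDeq, hRe]
        linear_combination (4*l) * hA2
      have hF : 0 < l + (1+l)*R + (1+l)^2*B := by
        have h1 : 0 ≤ (1+l)*R := mul_nonneg (by linarith) h
        have h2 : 0 < (1+l)^2*B := by positivity
        linarith
      have hlt : R^2 < S^2 := by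
        have h5 := mul_pos hBpos hF
        linarith
      exact lt_of_pow_lt_pow_left₀ 2 hS0 hlt
  have hCS : 0 < C + S := by linarith
  have h1 : (C - S)*(C + S) < (2*l*C')*(C + S) := by
    apply mul_lt_mul_of_pos_right _ hCS
    rw [hR] at hSR
    linarith
  have e1 : (C - S)*(C + S) = (2*l)*(2*D) := by linear_combination -hS2
  have e2 : (2*l*C')*(C + S) = (2*l)*(C'*(C + S)) := by ring
  have h2 : (2*l)*(2*D) < (2*l)*(C'*(C + S)) := by linarith
  have h3 : 2*D < C'*(C + S) := (mul_lt_mul_iff_right₀ (by linarith : (0:ℝ) < 2*l)).mp h2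
  linarith
end

section
/- For n ≥ 2 and k > 1, μ_{k,1}(λ) → k - 1 as λ → 0⁺ and μ_{k,1}(λ) → -∞ as λ → 1⁻, where μ_{k,1}(λ) = 2D/(C + √(C²-4λD)) - n(1+λ^{n-1})/(1-λⁿ) with α = n/2+k-1, ω = -α log λ, C = α(λ+1)coth ω + (n/2)(λ-1), D = (n+k-1)(k-1). -/
open Filter Real Set Topology

private lemma coth_tendsto_atTop : Tendsto (fun x => Real.cosh x / Real.sinh x) atTop (𝓝 1) := by
  have h2 : Tendsto (fun x : ℝ => Real.exp (-(2 * x))) atTop (𝓝 0) :=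
    Real.tendsto_exp_neg_atTop_nhds_zero.comp ((tendsto_const_mul_atTop_of_pos two_pos).mpr tendsto_id)
  have hmain : Tendsto (fun x : ℝ => (1 + Real.exp (-(2*x))) / (1 - Real.exp (-(2*x)))) atTop (𝓝 1) := by
    have hone : Tendsto (fun _ : ℝ => (1:ℝ)) atTop (𝓝 1) := tendsto_const_nhds
    have := (hone.add h2).div (hone.sub h2) (show (1:ℝ) - 0 ≠ 0 by norm_num)
    rw [show ((1:ℝ) + 0) / (1 - 0) = 1 by norm_num] at this
    exact this
  apply hmain.congr'
  filter_upwards [eventually_gt_atTop (0:ℝ)] with x hx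
  have hex : Real.exp x ≠ 0 := (Real.exp_pos x).ne'
  have hlt : Real.exp (-x) < Real.exp x := Real.exp_lt_exp.mpr (by linarith)
  have hs : Real.sinh x ≠ 0 := (Real.sinh_pos_iff.mpr hx).ne'
  have hd : (1:ℝ) - Real.exp (-(2*x)) ≠ 0 := by
    have : Real.exp (-(2*x)) < 1 := Real.exp_lt_one_iff.mpr (by linarith)
    linarith
  have hs2 : (Real.exp x - Real.exp (-x)) / 2 ≠ 0 := ne_of_gt (by linarith)
  have e1 : Real.exp (-(2*x)) = Real.exp (-x) * Real.exp (-x) := by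
    rw [← Real.exp_add]; ring_nf
  have e2 : Real.exp (-x) * Real.exp x = 1 := by
    rw [← Real.exp_add]; simp
  rw [Real.cosh_eq, Real.sinh_eq, div_eq_div_iff hd hs2, e1]
  linear_combination Real.exp (-x) * e2

private lemma coth_tendsto_zero : Tendsto (fun x => Real.cosh x / Real.sinh x) (𝓝[>] (0:ℝ)) atTop := by
  have hsinh : Tendsto Real.sinh (𝓝[>] (0:ℝ)) (𝓝[>] (0:ℝ)) := by
    apply tendsto_nhdsWithin_of_tendsto_nhds_of_eventually_within
    · have := Real.continuous_sinh.tendsto 0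
      simp only [Real.sinh_zero] at this
      exact this.mono_left nhdsWithin_le_nhds
    · filter_upwards [self_mem_nhdsWithin] with x hx
      exact Real.sinh_pos_iff.mpr hx
  have hinv : Tendsto (fun x => (Real.sinh x)⁻¹) (𝓝[>] (0:ℝ)) atTop :=
    tendsto_inv_nhdsGT_zero.comp hsinh
  have hcosh : Tendsto Real.cosh (𝓝[>] (0:ℝ)) (𝓝 1) := by
    have := Real.continuous_cosh.tendsto 0
    simp only [Real.cosh_zero] at this
    exact this.mono_left nhdsWithin_le_nhds
  have := hcosh.pos_mul_atTop one_pos hinv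
  simpa [div_eq_mul_inv] using this

theorem stmt9 (n : ℕ) (hn : 2 ≤ n) (k : ℝ) (hk : 1 < k) (α : ℝ) (hα : α = n/2 + k - 1)
    (C : ℝ → ℝ)
    (hC : ∀ l : ℝ, C l = α * (l + 1) * (Real.cosh (-α * Real.log l) / Real.sinh (-α * Real.log l)) + (n/2) * (l - 1))
    (D : ℝ) (hD : D = (n + k - 1) * (k - 1))
    (μ : ℝ → ℝ)
    (hμ : ∀ l : ℝ, μ l = 2*D / (C l + Real.sqrt ((C l)^2 - 4*l*D))
        - n * (1 + l^(n-1)) / (1 - l^n)) :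
    Filter.Tendsto μ (nhdsWithin 0 (Set.Ioi 0)) (nhds (k - 1)) ∧
    Filter.Tendsto μ (nhdsWithin 1 (Set.Iio 1)) Filter.atBot := by
  have hn2 : (2:ℝ) ≤ (n:ℝ) := by exact_mod_cast hn
  have hαpos : 0 < α := by rw [hα]; nlinarith
  have hk1 : 0 < k - 1 := by linarith
  constructor
  · -- limit as l → 0⁺
    have hlog : Tendsto Real.log (𝓝[>] (0:ℝ)) atBot :=
      Real.tendsto_log_nhdsNE_zero.mono_left
        (nhdsWithin_mono _ (fun x hx => ne_of_gt hx))
    have hω : Tendsto (fun l => -α * Real.log l) (𝓝[>] (0:ℝ)) atTop :=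
      (tendsto_const_mul_atTop_of_neg (by linarith)).mpr hlog
    have hcoth : Tendsto (fun l => Real.cosh (-α * Real.log l) / Real.sinh (-α * Real.log l))
        (𝓝[>] (0:ℝ)) (𝓝 1) := coth_tendsto_atTop.comp hω
    have hC0 : Tendsto C (𝓝[>] (0:ℝ)) (𝓝 (k - 1)) := by
      have h1 : Tendsto (fun l : ℝ => α * (l + 1)) (𝓝[>] (0:ℝ)) (𝓝 (α * (0 + 1))) :=
        ((continuous_const.mul (continuous_id.add continuous_const)).tendsto 0).mono_left
          nhdsWithin_le_nhds
      have h2 : Tendsto (fun l : ℝ => (n/2 : ℝ) * (l - 1)) (𝓝[>] (0:ℝ)) (𝓝 ((n/2 : ℝ) * (0 - 1))) :=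
        ((continuous_const.mul (continuous_id.sub continuous_const)).tendsto 0).mono_left
          nhdsWithin_le_nhds
      have := (h1.mul hcoth).add h2
      have heq : α * (0 + 1) * 1 + (n/2 : ℝ) * (0 - 1) = k - 1 := by rw [hα] at *; ring
      rw [heq] at this
      exact this.congr (fun l => (hC l).symm)
    have hsq : Tendsto (fun l => Real.sqrt ((C l)^2 - 4*l*D)) (𝓝[>] (0:ℝ)) (𝓝 (k - 1)) := by
      have harg : Tendsto (fun l => (C l)^2 - 4*l*D) (𝓝[>] (0:ℝ)) (𝓝 ((k-1)^2 - 4*0*D)) := by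
        exact (hC0.pow 2).sub
          (((continuous_const.mul continuous_id).mul continuous_const).tendsto 0 |>.mono_left
            nhdsWithin_le_nhds)
      have := (Real.continuous_sqrt.tendsto _).comp harg
      rw [show (k-1)^2 - 4*0*D = (k-1)^2 by ring, Real.sqrt_sq hk1.le] at this
      exact this
    have hden : Tendsto (fun l => C l + Real.sqrt ((C l)^2 - 4*l*D)) (𝓝[>] (0:ℝ))
        (𝓝 ((k-1) + (k-1))) := hC0.add hsq
    have hterm1 : Tendsto (fun l => 2*D / (C l + Real.sqrt ((C l)^2 - 4*l*D))) (𝓝[>] (0:ℝ))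
        (𝓝 (2*D / ((k-1) + (k-1)))) := tendsto_const_nhds.div hden (by linarith)
    have hpow1 : Tendsto (fun l : ℝ => l ^ (n-1)) (𝓝[>] (0:ℝ)) (𝓝 0) := by
      have := (continuous_pow (n-1)).tendsto (0:ℝ)
      rw [zero_pow (by omega)] at this
      exact this.mono_left nhdsWithin_le_nhds
    have hpow2 : Tendsto (fun l : ℝ => l ^ n) (𝓝[>] (0:ℝ)) (𝓝 0) := by
      have := (continuous_pow n).tendsto (0:ℝ)
      rw [zero_pow (by omega)] at this
      exact this.mono_left nhdsWithin_le_nhds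
    have hterm2 : Tendsto (fun l : ℝ => (n:ℝ) * (1 + l^(n-1)) / (1 - l^n)) (𝓝[>] (0:ℝ))
        (𝓝 ((n:ℝ) * (1 + 0) / (1 - 0))) :=
      (tendsto_const_nhds.mul (tendsto_const_nhds.add hpow1)).div
        (tendsto_const_nhds.sub hpow2) (by norm_num)
    have := hterm1.sub hterm2
    have hval : 2*D / ((k-1) + (k-1)) - (n:ℝ) * (1 + 0) / (1 - 0) = k - 1 := by
      rw [hD]
      field_simp
      ring
    rw [hval] at this
    exact this.congr (fun l => (hμ l).symm)
  · -- limit as l → 1⁻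
    have hev : ∀ᶠ l in 𝓝[<] (1:ℝ), l ∈ Ioo (0:ℝ) 1 :=
      Ioo_mem_nhdsLT_of_mem (by constructor <;> norm_num)
    have hω : Tendsto (fun l => -α * Real.log l) (𝓝[<] (1:ℝ)) (𝓝[>] (0:ℝ)) := by
      apply tendsto_nhdsWithin_of_tendsto_nhds_of_eventually_within
      · have hlog1 : Tendsto Real.log (𝓝 (1:ℝ)) (𝓝 0) := by
          have := (Real.continuousAt_log one_ne_zero).tendsto
          simpa using this
        have := hlog1.const_mul (-α)
        simpa using this.mono_left nhdsWithin_le_nhds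
      · filter_upwards [hev] with l hl
        have : Real.log l < 0 := Real.log_neg hl.1 hl.2
        have : 0 < -α * Real.log l := by nlinarith
        exact this
    have hcoth : Tendsto (fun l => Real.cosh (-α * Real.log l) / Real.sinh (-α * Real.log l))
        (𝓝[<] (1:ℝ)) atTop := coth_tendsto_zero.comp hω
    have hC1 : Tendsto C (𝓝[<] (1:ℝ)) atTop := by
      have h1 : Tendsto (fun l : ℝ => α * (l + 1)) (𝓝[<] (1:ℝ)) (𝓝 (α * (1 + 1))) :=
        ((continuous_const.mul (continuous_id.add continuous_const)).tendsto 1).mono_left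
          nhdsWithin_le_nhds
      have h2 : Tendsto (fun l : ℝ => (n/2 : ℝ) * (l - 1)) (𝓝[<] (1:ℝ)) (𝓝 ((n/2 : ℝ) * (1 - 1))) :=
        ((continuous_const.mul (continuous_id.sub continuous_const)).tendsto 1).mono_left
          nhdsWithin_le_nhds
      have := (h1.pos_mul_atTop (by nlinarith) hcoth).atTop_add h2
      exact this.congr (fun l => (hC l).symm)
    have hden : Tendsto (fun l => C l + Real.sqrt ((C l)^2 - 4*l*D)) (𝓝[<] (1:ℝ)) atTop :=
      tendsto_atTop_mono (fun l => le_add_of_nonneg_right (Real.sqrt_nonneg _)) hC1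
    have hterm1 : Tendsto (fun l => 2*D / (C l + Real.sqrt ((C l)^2 - 4*l*D))) (𝓝[<] (1:ℝ))
        (𝓝 0) := tendsto_const_nhds.div_atTop hden
    have hdenom : Tendsto (fun l : ℝ => 1 - l^n) (𝓝[<] (1:ℝ)) (𝓝[>] (0:ℝ)) := by
      apply tendsto_nhdsWithin_of_tendsto_nhds_of_eventually_within
      · have hcont : Continuous (fun l : ℝ => 1 - l ^ n) := continuous_const.sub (continuous_pow n)
        have := hcont.tendsto (1:ℝ)
        simpa using this.mono_left nhdsWithin_le_nhds
      · filter_upwards [hev] with l hl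
        have : l ^ n < 1 := pow_lt_one₀ hl.1.le hl.2 (by omega)
        simpa [Set.mem_Ioi] using by linarith
    have hnum : Tendsto (fun l : ℝ => (n:ℝ) * (1 + l^(n-1))) (𝓝[<] (1:ℝ))
        (𝓝 ((n:ℝ) * (1 + 1^(n-1)))) :=
      ((continuous_const.mul (continuous_const.add (continuous_pow (n-1)))).tendsto 1).mono_left
        nhdsWithin_le_nhds
    have hterm2 : Tendsto (fun l : ℝ => (n:ℝ) * (1 + l^(n-1)) / (1 - l^n)) (𝓝[<] (1:ℝ)) atTop := by
      have hinv : Tendsto (fun l : ℝ => (1 - l^n)⁻¹) (𝓝[<] (1:ℝ)) atTop :=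
        tendsto_inv_nhdsGT_zero.comp hdenom
      have := hnum.pos_mul_atTop (by simp; nlinarith) hinv
      simpa [div_eq_mul_inv] using this
    have := hterm1.add_atBot (tendsto_neg_atTop_atBot.comp hterm2)
    apply this.congr
    intro l
    rw [hμ l]
    simp [sub_eq_add_neg]
end

section
/- For every ω > 0, the 2×2 symmetric real matrix with entries m₁₁ = (1/λ)(coth ω - ω/sinh²ω), m₂₂ = coth ω - ω/sinh²ω, and m₁₂ = m₂₁ = (1/√λ)(ω·cosh ω/sinh²ω - 1/sinh ω), where λ ∈ (0,1), is positive definite. -/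
lemma posdef_fin_two {a b c : ℝ} (ha : 0 < a) (hd : b^2 < a*c) :
    (!![a, b; b, c] : Matrix (Fin 2) (Fin 2) ℝ).PosDef := by
  rw [Matrix.posDef_iff_dotProduct_mulVec]
  constructor
  · ext i j
    fin_cases i <;> fin_cases j <;> simp [Matrix.conjTranspose, Matrix.vecHead, Matrix.vecTail]
  · intro x hx
    have hx' : x 0 ≠ 0 ∨ x 1 ≠ 0 := by
      by_contra h
      push_neg at h
      apply hx
      ext i; fin_cases i <;> simp [h.1, h.2]
    simp [Matrix.mulVec, dotProduct, Fin.sum_univ_two]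
    rcases hx' with h | h
    · rcases eq_or_ne (x 1) 0 with h1 | h1
      · simp only [h1]
        nlinarith [sq_pos_iff.mpr h]
      · nlinarith [sq_nonneg (a * x 0 + b * x 1), sq_pos_iff.mpr h1]
    · nlinarith [sq_nonneg (a * x 0 + b * x 1), sq_pos_iff.mpr h]

theorem stmt10 (l ω : ℝ) (hl : l ∈ Set.Ioo (0:ℝ) 1) (hω : 0 < ω) :
    (!![(1/l) * ((Real.cosh ω / Real.sinh ω) - ω/(Real.sinh ω)^2),
        (1/Real.sqrt l) * (ω * Real.cosh ω/(Real.sinh ω)^2 - 1/Real.sinh ω);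
        (1/Real.sqrt l) * (ω * Real.cosh ω/(Real.sinh ω)^2 - 1/Real.sinh ω),
        (Real.cosh ω / Real.sinh ω) - ω/(Real.sinh ω)^2] : Matrix (Fin 2) (Fin 2) ℝ).PosDef := by
  obtain ⟨hl0, hl1⟩ := hl
  have hs : 0 < Real.sinh ω := Real.sinh_pos_iff.mpr hω
  have hc : 1 ≤ Real.cosh ω := Real.one_le_cosh ω
  have hlt : ω < Real.sinh ω := Real.self_lt_sinh_iff.mpr hω
  have hcsq : Real.cosh ω ^ 2 = 1 + Real.sinh ω ^ 2 := Real.cosh_sq' ω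
  set s := Real.sinh ω
  set ch := Real.cosh ω
  have hA : 0 < ch / s - ω / s ^ 2 := by
    rw [div_sub_div _ _ (ne_of_gt hs) (by positivity), div_pos_iff]
    left
    constructor
    · nlinarith
    · positivity
  apply posdef_fin_two
  · positivity
  · have hsq : (1 / Real.sqrt l) ^ 2 = 1 / l := by
      rw [div_pow, one_pow, Real.sq_sqrt hl0.le]
    rw [mul_pow, hsq, mul_assoc, mul_lt_mul_iff_right₀ (by positivity : (0:ℝ) < 1 / l), ← sq]
    have hso : 0 < s ^ 2 - ω ^ 2 := by nlinarith
    have key : (ω * ch - s) ^ 2 < (ch * s - ω) ^ 2 := by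
      nlinarith [mul_pos (pow_pos hs 2) hso]
    have hA' : ch / s - ω / s ^ 2 = (ch * s - ω) / s ^ 2 := by
      field_simp
    have hB' : ω * ch / s ^ 2 - 1 / s = (ω * ch - s) / s ^ 2 := by
      field_simp
    rw [hA', hB', div_pow, div_pow, div_lt_div_iff₀ (by positivity) (by positivity)]
    nlinarith [mul_lt_mul_of_pos_right key (pow_pos (pow_pos hs 2) 2)]
end

section
/- For n ≥ 2 and λ ∈ (0,1), setting α = n/2 (i.e. k = 1) and ω = -(n/2) log λ, one has C := α(λ+1)·coth ω + (n/2)(λ-1) = n(λ + λⁿ)/(1 - λⁿ) = λ/c_λ and D := α² - n²/4 = 0; consequently the two eigenvalues of the linearized operator at degree k = 1 are μ_{1,1}(λ) = -1/c_λ < 0 and μ_{1,2}(λ) = 0, where c_λ = (1/n)(1-λⁿ)/(1+λ^{n-1}). -/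
theorem stmt12 (n : ℕ) (hn : 2 ≤ n) (l α ω C D c μ₁ μ₂ : ℝ)
    (hl : l ∈ Set.Ioo (0:ℝ) 1)
    (hα : α = n/2) (hω : ω = -(n/2) * Real.log l)
    (hC : C = α * (l + 1) * (Real.cosh ω / Real.sinh ω) + (n/2) * (l - 1))
    (hD : D = α^2 - n^2/4)
    (hc : c = (1/n) * (1 - l^n) / (1 + l^(n-1)))
    (hμ₁ : μ₁ = (C - Real.sqrt (C^2 - 4*l*D)) / (2*l) - 1/c)
    (hμ₂ : μ₂ = (C + Real.sqrt (C^2 - 4*l*D)) / (2*l) - 1/c) :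
    C = n * (l + l^n) / (1 - l^n) ∧ C = l / c ∧ D = 0 ∧
    μ₁ = -1/c ∧ μ₁ < 0 ∧ μ₂ = 0 := by
  obtain ⟨hl0, hl1⟩ := hl
  have hnR : (0:ℝ) < n := by exact_mod_cast (by omega : 0 < n)
  have hln1 : l ^ n < 1 := pow_lt_one₀ hl0.le hl1 (by omega)
  have hln0 : 0 < l ^ n := pow_pos hl0 n
  set t := l ^ ((n:ℝ)/2) with ht
  have ht0 : 0 < t := Real.rpow_pos_of_pos hl0 _
  have ht2 : t ^ 2 = l ^ n := by
    rw [ht, ← Real.rpow_natCast (l ^ ((n:ℝ)/2)) 2, ← Real.rpow_mul hl0.le]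
    norm_num [Real.rpow_natCast]
  have hexp : Real.exp ω = t⁻¹ := by
    rw [hω, ht, ← Real.rpow_neg hl0.le, Real.rpow_def_of_pos hl0]
    ring_nf
  have hexpn : Real.exp (-ω) = t := by
    rw [Real.exp_neg, hexp, inv_inv]
  have hcosh : Real.cosh ω = (t⁻¹ + t) / 2 := by
    rw [Real.cosh_eq, hexp, hexpn]
  have hsinh : Real.sinh ω = (t⁻¹ - t) / 2 := by
    rw [Real.sinh_eq, hexp, hexpn]
  have ht1 : t < 1 := by nlinarith [ht2]
  have h1t2 : (0:ℝ) < 1 - t ^ 2 := by rw [ht2]; linarith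
  have hcoth : Real.cosh ω / Real.sinh ω = (1 + l ^ n) / (1 - l ^ n) := by
    have hts : 0 < t⁻¹ - t := by nlinarith [mul_inv_cancel₀ ht0.ne']
    rw [hcosh, hsinh, ← ht2, div_div_div_eq, div_eq_div_iff (by positivity) h1t2.ne']
    field_simp
  have hC1 : C = n * (l + l ^ n) / (1 - l ^ n) := by
    have h1l : (1:ℝ) - l ^ n ≠ 0 := by linarith
    rw [hC, hα, hcoth]
    field_simp
    ring
  have hpow : l ^ n = l * l ^ (n - 1) := by
    conv_lhs => rw [show n = (n - 1) + 1 by omega]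
    rw [pow_succ']
  have hden : (0:ℝ) < 1 + l ^ (n - 1) := by positivity
  have hcpos : 0 < c := by
    rw [hc]
    apply div_pos (mul_pos (by positivity) (by linarith)) hden
  have hC2 : C = l / c := by
    rw [hC1, hc, hpow]
    field_simp
  have hD0 : D = 0 := by rw [hD, hα]; ring
  have hCpos : 0 < C := by
    rw [hC1]
    apply div_pos (by positivity) (by linarith)
  have hsq : Real.sqrt (C ^ 2 - 4 * l * D) = C := by
    rw [hD0]
    rw [show C ^ 2 - 4 * l * 0 = C ^ 2 by ring]
    exact Real.sqrt_sq hCpos.le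
  have hm1 : μ₁ = -1 / c := by rw [hμ₁, hsq]; ring
  refine ⟨hC1, hC2, hD0, hm1, ?_, ?_⟩
  · rw [hm1, neg_div]
    have : 0 < 1 / c := by positivity
    linarith
  · rw [hμ₂, hsq, hC2]
    field_simp
    ring
end

section
/- For fixed n ≥ 2 and λ ∈ (0,1), both eigenvalue branches k ↦ μ_{k,1}(λ) and k ↦ μ_{k,2}(λ) are strictly increasing in k ∈ (0,∞), where μ_{k,j}(λ) are the eigenvalues of the symmetric matrix M̃_{λ,k} - (1/c_λ)·Id with M̃_{λ,k} = [[(1/λ)(α coth ω - n/2), -α/(√λ sinh ω)], [-α/(√λ sinh ω), α coth ω + n/2]], α = n/2+k-1, ω = -α log λ, 1/c_λ = n(1+λ^{n-1})/(1-λⁿ). -/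
open Real

lemma mono_f : StrictMonoOn (fun y => y * Real.cosh y / Real.sinh y) (Set.Ioi (0:ℝ)) := by
  apply strictMonoOn_of_deriv_pos (convex_Ioi 0)
  · exact ((continuous_id.mul Real.continuous_cosh).continuousOn).div
      Real.continuous_sinh.continuousOn (fun y hy => ne_of_gt (Real.sinh_pos_iff.mpr hy))
  · intro y hy
    rw [interior_Ioi] at hy
    have hy' : (0:ℝ) < y := hy
    have hs : 0 < Real.sinh y := Real.sinh_pos_iff.mpr hy'
    have hd : HasDerivAt (fun y => y * Real.cosh y / Real.sinh y)
        (((1 * Real.cosh y + y * Real.sinh y) * Real.sinh y - y * Real.cosh y * Real.cosh y) / (Real.sinh y)^2) y :=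
      ((hasDerivAt_id y).mul (Real.hasDerivAt_cosh y)).div (Real.hasDerivAt_sinh y) (ne_of_gt hs)
    rw [hd.deriv]
    have h1 : Real.cosh y ^ 2 - Real.sinh y ^ 2 = 1 := Real.cosh_sq_sub_sinh_sq y
    have h2 : y < Real.sinh y := Real.self_lt_sinh_iff.mpr hy'
    have h3 : 1 < Real.cosh y := Real.one_lt_cosh.mpr (ne_of_gt hy')
    have hnum : 0 < (1 * Real.cosh y + y * Real.sinh y) * Real.sinh y - y * Real.cosh y * Real.cosh y := by
      nlinarith
    positivity

lemma mono_q : StrictMonoOn (fun y => y * Real.sinh y / Real.cosh y) (Set.Ioi (0:ℝ)) := by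
  apply strictMonoOn_of_deriv_pos (convex_Ioi 0)
  · exact ((continuous_id.mul Real.continuous_sinh).continuousOn).div
      Real.continuous_cosh.continuousOn (fun y _ => ne_of_gt (Real.cosh_pos y))
  · intro y hy
    rw [interior_Ioi] at hy
    have hy' : (0:ℝ) < y := hy
    have hc : 0 < Real.cosh y := Real.cosh_pos y
    have hs : 0 < Real.sinh y := Real.sinh_pos_iff.mpr hy'
    have hd : HasDerivAt (fun y => y * Real.sinh y / Real.cosh y)
        (((1 * Real.sinh y + y * Real.cosh y) * Real.cosh y - y * Real.sinh y * Real.sinh y) / (Real.cosh y)^2) y :=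
      ((hasDerivAt_id y).mul (Real.hasDerivAt_sinh y)).div (Real.hasDerivAt_cosh y) (ne_of_gt hc)
    rw [hd.deriv]
    have h1 : Real.cosh y ^ 2 - Real.sinh y ^ 2 = 1 := Real.cosh_sq_sub_sinh_sq y
    have hnum : 0 < (1 * Real.sinh y + y * Real.cosh y) * Real.cosh y - y * Real.sinh y * Real.sinh y := by
      nlinarith [mul_pos hs hc]
    positivity

lemma sqrt_lip (x y X Y : ℝ) :
    Real.sqrt (X^2+Y^2) - Real.sqrt (x^2+y^2) ≤ Real.sqrt ((X-x)^2+(Y-y)^2) := by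
  have h := norm_add_le (⟨x, y⟩ : ℂ) ⟨X-x, Y-y⟩
  have hz : ({ re := x, im := y } + { re := X - x, im := Y - y } : ℂ) = { re := X, im := Y } := by
    apply Complex.ext <;> simp
  rw [hz] at h
  simp only [Complex.norm_def, Complex.normSq_mk] at h
  have r1 : X*X + Y*Y = X^2 + Y^2 := by ring
  have r2 : x*x + y*y = x^2 + y^2 := by ring
  have r3 : (X-x)*(X-x) + (Y-y)*(Y-y) = (X-x)^2 + (Y-y)^2 := by ring
  rw [r1, r2, r3] at h
  linarith

lemma half1 (a y : ℝ) (hs : 0 < Real.sinh y) (hc : 0 < Real.cosh y) :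
    a * (Real.cosh (2*y) / Real.sinh (2*y))
      = (a * Real.cosh y / Real.sinh y + a * Real.sinh y / Real.cosh y)/2 := by
  rw [Real.cosh_two_mul, Real.sinh_two_mul]
  have h1 : Real.sinh y ≠ 0 := ne_of_gt hs
  have h2 : Real.cosh y ≠ 0 := ne_of_gt hc
  field_simp

lemma half2 (a y sl : ℝ) (hs : 0 < Real.sinh y) (hc : 0 < Real.cosh y) (hsl : 0 < sl) :
    -a/(sl * Real.sinh (2*y))
      = (a * Real.sinh y / Real.cosh y - a * Real.cosh y / Real.sinh y)/(2*sl) := by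
  rw [Real.sinh_two_mul]
  have h1 : Real.sinh y ≠ 0 := ne_of_gt hs
  have h2 : Real.cosh y ≠ 0 := ne_of_gt hc
  have h3 : sl ≠ 0 := ne_of_gt hsl
  field_simp
  linear_combination a * (Real.cosh_sq_sub_sinh_sq y)

set_option maxHeartbeats 1000000 in
theorem stmt14 (n : ℕ) (hn : 2 ≤ n) (l : ℝ) (hl : l ∈ Set.Ioo (0:ℝ) 1)
    (M : ℝ → Matrix (Fin 2) (Fin 2) ℝ)
    (hM : ∀ k : ℝ, M k =
      !![(1/l) * ((n/2+k-1) * (Real.cosh (-(n/2+k-1)*Real.log l) / Real.sinh (-(n/2+k-1)*Real.log l)) - n/2),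
         -(n/2+k-1)/(Real.sqrt l * Real.sinh (-(n/2+k-1)*Real.log l));
         -(n/2+k-1)/(Real.sqrt l * Real.sinh (-(n/2+k-1)*Real.log l)),
         (n/2+k-1) * (Real.cosh (-(n/2+k-1)*Real.log l) / Real.sinh (-(n/2+k-1)*Real.log l)) + n/2]
        - (n*(1+l^(n-1))/(1-l^n)) • 1)
    (μ₁ μ₂ : ℝ → ℝ)
    (hμ : ∀ k ∈ Set.Ioi (0:ℝ), μ₁ k < μ₂ k ∧
        (M k - μ₁ k • 1).det = 0 ∧ (M k - μ₂ k • 1).det = 0) :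
    StrictMonoOn μ₁ (Set.Ioi 0) ∧ StrictMonoOn μ₂ (Set.Ioi 0) := by
  obtain ⟨hl0, hl1⟩ := hl
  have hn2 : (2:ℝ) ≤ (n:ℝ) := by exact_mod_cast hn
  have hLpre : 0 < -Real.log l := by
    have := Real.log_neg hl0 hl1
    linarith
  obtain ⟨L, hLdef⟩ : ∃ L : ℝ, L = -Real.log l := ⟨_, rfl⟩
  have hL : 0 < L := hLdef ▸ hLpre
  obtain ⟨α, hαdef⟩ : ∃ α : ℝ → ℝ, α = fun k => (n:ℝ)/2 + k - 1 := ⟨_, rfl⟩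
  obtain ⟨c, hcdef⟩ : ∃ c : ℝ, c = (n:ℝ)*(1+l^(n-1))/(1-l^n) := ⟨_, rfl⟩
  obtain ⟨A, hAdef⟩ : ∃ A : ℝ → ℝ,
    A = fun k => (1/l) * (α k * (Real.cosh (α k * L) / Real.sinh (α k * L)) - (n:ℝ)/2) - c := ⟨_, rfl⟩
  obtain ⟨B, hBdef⟩ : ∃ B : ℝ → ℝ,
    B = fun k => -(α k)/(Real.sqrt l * Real.sinh (α k * L)) := ⟨_, rfl⟩
  obtain ⟨D, hDdef⟩ : ∃ D : ℝ → ℝ,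
    D = fun k => α k * (Real.cosh (α k * L) / Real.sinh (α k * L)) + (n:ℝ)/2 - c := ⟨_, rfl⟩
  have hαpos : ∀ k ∈ Set.Ioi (0:ℝ), 0 < α k := by
    intro k hk
    have : (0:ℝ) < k := hk
    simp only [hαdef]
    linarith
  -- determinant formula
  have hdet : ∀ k μ : ℝ, (M k - μ • 1).det = (A k - μ) * (D k - μ) - (B k)^2 := by
    intro k μ
    have harg : -((n:ℝ)/2+k-1)*Real.log l = ((n:ℝ)/2+k-1) * L := by
      rw [hLdef]; ring
    rw [hM k]
    simp only [Matrix.det_fin_two, Matrix.sub_apply, Matrix.smul_apply, Matrix.one_apply,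
      Matrix.cons_val', Matrix.cons_val_zero, Matrix.cons_val_one, Matrix.head_cons,
      Matrix.head_fin_const, Matrix.empty_val', Matrix.cons_val_fin_one, Matrix.of_apply,
      hAdef, hBdef, hDdef, hcdef, hαdef]
    rw [harg]
    norm_num
    ring
  -- eigenvalue formulas
  have key : ∀ k ∈ Set.Ioi (0:ℝ),
      μ₁ k + μ₂ k = A k + D k ∧
      μ₂ k - μ₁ k = Real.sqrt ((A k - D k)^2 + (2*B k - 0)^2) := by
    intro k hk
    obtain ⟨hlt, h1, h2⟩ := hμ k hk
    rw [hdet] at h1 h2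
    have hne : μ₂ k - μ₁ k ≠ 0 := sub_ne_zero_of_ne (ne_of_gt hlt)
    have h3 : (A k + D k - (μ₁ k + μ₂ k)) * (μ₂ k - μ₁ k) = 0 := by linear_combination h1 - h2
    have hsum : μ₁ k + μ₂ k = A k + D k := by
      rcases mul_eq_zero.mp h3 with h | h
      · linarith
      · exact absurd h hne
    have hprod : μ₁ k * μ₂ k = A k * D k - (B k)^2 := by
      linear_combination (μ₁ k) * hsum - h1
    have hdiff : (μ₂ k - μ₁ k)^2 = (A k - D k)^2 + (2*B k - 0)^2 := by
      linear_combination (μ₁ k + μ₂ k + A k + D k) * hsum - 4*hprod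
    refine ⟨hsum, ?_⟩
    rw [← hdiff, Real.sqrt_sq (by linarith)]
  have hsql : 0 < Real.sqrt l := Real.sqrt_pos.mpr hl0
  -- entry rewriting in half-angle form
  have entry : ∀ k ∈ Set.Ioi (0:ℝ),
      A k = (1/l) * ((α k * Real.cosh (α k * L / 2) / Real.sinh (α k * L / 2)
                + α k * Real.sinh (α k * L / 2) / Real.cosh (α k * L / 2))/2 - (n:ℝ)/2) - c ∧
      D k = (α k * Real.cosh (α k * L / 2) / Real.sinh (α k * L / 2)
                + α k * Real.sinh (α k * L / 2) / Real.cosh (α k * L / 2))/2 + (n:ℝ)/2 - c ∧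
      B k = (α k * Real.sinh (α k * L / 2) / Real.cosh (α k * L / 2)
                - α k * Real.cosh (α k * L / 2) / Real.sinh (α k * L / 2))/(2*Real.sqrt l) := by
    intro k hk
    have ha : 0 < α k := hαpos k hk
    have hypos : 0 < α k * L / 2 := by positivity
    obtain ⟨y, hydef⟩ : ∃ y : ℝ, y = α k * L / 2 := ⟨_, rfl⟩
    have hy : 0 < y := hydef ▸ hypos
    have h2y : α k * L = 2 * y := by rw [hydef]; ring
    have hs : 0 < Real.sinh y := Real.sinh_pos_iff.mpr hy
    have hc : 0 < Real.cosh y := Real.cosh_pos y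
    rw [← hydef]
    refine ⟨?_, ?_, ?_⟩
    · simp only [hAdef]
      rw [h2y, half1 (α k) y hs hc]
    · simp only [hDdef]
      rw [h2y, half1 (α k) y hs hc]
    · simp only [hBdef]
      rw [h2y, half2 (α k) y (Real.sqrt l) hs hc hsql]
  -- the main comparison
  have hmain : ∀ k1 ∈ Set.Ioi (0:ℝ), ∀ k2 ∈ Set.Ioi (0:ℝ), k1 < k2 →
      0 < (A k2 + D k2) - (A k1 + D k1) ∧
      Real.sqrt ((A k2 - D k2)^2 + (2*B k2 - 0)^2) - Real.sqrt ((A k1 - D k1)^2 + (2*B k1 - 0)^2)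
        < (A k2 + D k2) - (A k1 + D k1) ∧
      Real.sqrt ((A k1 - D k1)^2 + (2*B k1 - 0)^2) - Real.sqrt ((A k2 - D k2)^2 + (2*B k2 - 0)^2)
        < (A k2 + D k2) - (A k1 + D k1) := by
    intro k1 hk1 k2 hk2 hklt
    have ha1 : 0 < α k1 := hαpos k1 hk1
    have ha2 : 0 < α k2 := hαpos k2 hk2
    have halt : α k1 < α k2 := by simp only [hαdef]; linarith
    obtain ⟨y1, hy1def⟩ : ∃ y : ℝ, y = α k1 * L / 2 := ⟨_, rfl⟩
    obtain ⟨y2, hy2def⟩ : ∃ y : ℝ, y = α k2 * L / 2 := ⟨_, rfl⟩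
    have hy1 : 0 < y1 := by rw [hy1def]; positivity
    have hy2 : 0 < y2 := by rw [hy2def]; positivity
    have hylt : y1 < y2 := by
      rw [hy1def, hy2def]
      have := mul_lt_mul_of_pos_right halt hL
      linarith
    obtain ⟨p1, hp1def⟩ : ∃ p : ℝ, p = α k1 * Real.cosh y1 / Real.sinh y1 := ⟨_, rfl⟩
    obtain ⟨p2, hp2def⟩ : ∃ p : ℝ, p = α k2 * Real.cosh y2 / Real.sinh y2 := ⟨_, rfl⟩
    obtain ⟨q1, hq1def⟩ : ∃ q : ℝ, q = α k1 * Real.sinh y1 / Real.cosh y1 := ⟨_, rfl⟩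
    obtain ⟨q2, hq2def⟩ : ∃ q : ℝ, q = α k2 * Real.sinh y2 / Real.cosh y2 := ⟨_, rfl⟩
    have hfmono := mono_f (Set.mem_Ioi.mpr hy1) (Set.mem_Ioi.mpr hy2) hylt
    have hqmono := mono_q (Set.mem_Ioi.mpr hy1) (Set.mem_Ioi.mpr hy2) hylt
    simp only at hfmono hqmono
    have hLne : L ≠ 0 := ne_of_gt hL
    have hrew1 : ∀ (a yy : ℝ), 0 < a → yy = a * L / 2 →
        a * Real.cosh yy / Real.sinh yy = (2/L) * (yy * Real.cosh yy / Real.sinh yy) := by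
      intro a yy ha hyy
      have hyypos : 0 < yy := by rw [hyy]; positivity
      have hsy : Real.sinh yy ≠ 0 := ne_of_gt (Real.sinh_pos_iff.mpr hyypos)
      rw [hyy]
      field_simp
    have hrew2 : ∀ (a yy : ℝ), 0 < a → yy = a * L / 2 →
        a * Real.sinh yy / Real.cosh yy = (2/L) * (yy * Real.sinh yy / Real.cosh yy) := by
      intro a yy ha hyy
      have hcy : Real.cosh yy ≠ 0 := ne_of_gt (Real.cosh_pos _)
      rw [hyy]
      field_simp
    have h2L : 0 < 2/L := by positivity
    have hplt : p1 < p2 := by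
      rw [hp1def, hp2def, hrew1 _ _ ha1 hy1def, hrew1 _ _ ha2 hy2def]
      exact mul_lt_mul_of_pos_left hfmono h2L
    have hqlt : q1 < q2 := by
      rw [hq1def, hq2def, hrew2 _ _ ha1 hy1def, hrew2 _ _ ha2 hy2def]
      exact mul_lt_mul_of_pos_left hqmono h2L
    obtain ⟨eA1, eD1, eB1⟩ := entry k1 hk1
    obtain ⟨eA2, eD2, eB2⟩ := entry k2 hk2
    rw [← hy1def, ← hp1def, ← hq1def] at eA1 eD1 eB1
    rw [← hy2def, ← hp2def, ← hq2def] at eA2 eD2 eB2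
    obtain ⟨S, hSdef⟩ : ∃ S : ℝ, S = (p2 + q2)/2 - (p1 + q1)/2 := ⟨_, rfl⟩
    obtain ⟨dd, hdddef⟩ : ∃ d : ℝ, d = (q2 - p2)/2 - (q1 - p1)/2 := ⟨_, rfl⟩
    have hSpos : 0 < S := by rw [hSdef]; linarith
    have hddS : dd^2 < S^2 := by
      have hfact : S^2 - dd^2 = (p2-p1)*(q2-q1) := by rw [hSdef, hdddef]; ring
      have hmul := mul_pos (sub_pos.mpr hplt) (sub_pos.mpr hqlt)
      linarith only [hfact, hmul]
    have eT : (A k2 + D k2) - (A k1 + D k1) = (1/l + 1) * S := by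
      rw [hSdef]; linear_combination eA2 + eD2 - eA1 - eD1
    have eX : (A k2 - D k2) - (A k1 - D k1) = (1/l - 1) * S := by
      rw [hSdef]; linear_combination eA2 - eD2 - eA1 + eD1
    have eBdiff : (2*B k2 - 0) - (2*B k1 - 0) = 2*dd/Real.sqrt l := by
      rw [hdddef]; linear_combination 2*eB2 - 2*eB1
    have eY : ((2*B k2 - 0) - (2*B k1 - 0))^2 = 4*dd^2/l := by
      rw [eBdiff, div_pow, Real.sq_sqrt hl0.le]
      ring
    have hw : 0 < 1/l := by positivity
    have hTpos : 0 < (A k2 + D k2) - (A k1 + D k1) := by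
      rw [eT]; positivity
    have hcore : ((A k2 - D k2) - (A k1 - D k1))^2 + ((2*B k2 - 0) - (2*B k1 - 0))^2
        < ((A k2 + D k2) - (A k1 + D k1))^2 := by
      rw [eX, eY, eT]
      have expand : ((1/l + 1)*S)^2 - (((1/l - 1)*S)^2 + 4*dd^2/l) = 4*((1/l)*(S^2-dd^2)) := by
        field_simp
        ring
      linarith [mul_pos hw (sub_pos.mpr hddS)]
    have hsq1 : Real.sqrt ((A k2 - D k2)^2 + (2*B k2 - 0)^2) - Real.sqrt ((A k1 - D k1)^2 + (2*B k1 - 0)^2)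
        ≤ Real.sqrt (((A k2 - D k2) - (A k1 - D k1))^2 + ((2*B k2 - 0) - (2*B k1 - 0))^2) :=
      sqrt_lip (A k1 - D k1) (2*B k1 - 0) (A k2 - D k2) (2*B k2 - 0)
    have hsq2 : Real.sqrt ((A k1 - D k1)^2 + (2*B k1 - 0)^2) - Real.sqrt ((A k2 - D k2)^2 + (2*B k2 - 0)^2)
        ≤ Real.sqrt (((A k1 - D k1) - (A k2 - D k2))^2 + ((2*B k1 - 0) - (2*B k2 - 0))^2) :=
      sqrt_lip (A k2 - D k2) (2*B k2 - 0) (A k1 - D k1) (2*B k1 - 0)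
    have hflip : ((A k1 - D k1) - (A k2 - D k2))^2 + ((2*B k1 - 0) - (2*B k2 - 0))^2
        = ((A k2 - D k2) - (A k1 - D k1))^2 + ((2*B k2 - 0) - (2*B k1 - 0))^2 := by ring
    rw [hflip] at hsq2
    have hlt : Real.sqrt (((A k2 - D k2) - (A k1 - D k1))^2 + ((2*B k2 - 0) - (2*B k1 - 0))^2)
        < (A k2 + D k2) - (A k1 + D k1) := by
      exact (Real.sqrt_lt' hTpos).mpr hcore
    exact ⟨hTpos, lt_of_le_of_lt hsq1 hlt, lt_of_le_of_lt hsq2 hlt⟩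
  constructor
  · intro k1 hk1 k2 hk2 hklt
    obtain ⟨hs1, hd1⟩ := key k1 hk1
    obtain ⟨hs2, hd2⟩ := key k2 hk2
    obtain ⟨hT, hlt1, hlt2⟩ := hmain k1 hk1 k2 hk2 hklt
    rw [← hd1, ← hd2] at hlt1
    linarith
  · intro k1 hk1 k2 hk2 hklt
    obtain ⟨hs1, hd1⟩ := key k1 hk1
    obtain ⟨hs2, hd2⟩ := key k2 hk2
    obtain ⟨hT, hlt1, hlt2⟩ := hmain k1 hk1 k2 hk2 hklt
    rw [← hd1, ← hd2] at hlt2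
    linarith
end
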